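/- Let A be a normal n×n complex matrix and q ≥ 0. Then for all B ∈ M_n(ℂ), ‖AB − qBA‖_F² ≤ (1 + q²)(s₁(A)² + s₂(A)²)‖B‖_F², where s₁(A) ≥ s₂(A) are the two largest singular values of A. -/

import Mathlib

open scoped BigOperators Matrix
open Matrix

noncomputable def frobSq {n : ℕ} (M : Matrix (Fin n) (Fin n) ℂ) : ℝ :=
  ∑ i, ∑ j, ‖M i j‖ ^ 2

/-- The singular values of `A` (in some order): the square roots of the
eigenvalues of the Hermitian matrix `Aᴴ * A`. -/
noncomputable def sv {n : ℕ} (A : Matrix (Fin n) (Fin n) ℂ) (i : Fin n) : ℝ :=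
  Real.sqrt ((Matrix.isHermitian_conjTranspose_mul_self A).eigenvalues i)

section Aux

variable {n : ℕ}

lemma conj_mul_self' (z : ℂ) : star z * z = ((‖z‖ ^ 2 : ℝ) : ℂ) := by
  rw [Complex.star_def, mul_comm, Complex.mul_conj']; push_cast; ring

lemma conj_helper {n : ℕ} {U : Matrix (Fin n) (Fin n) ℂ} (h : U * star U = 1)
    (X Y : Matrix (Fin n) (Fin n) ℂ) :
    (star U * X * U) * (star U * Y * U) = star U * (X * Y) * U := by
  calc (star U * X * U) * (star U * Y * U)
      = star U * (X * ((U * star U) * (Y * U))) := by simp only [Matrix.mul_assoc]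
    _ = star U * (X * Y) * U := by rw [h, Matrix.one_mul]; simp only [Matrix.mul_assoc]

lemma conjTranspose_conj {n : ℕ} (U X : Matrix (Fin n) (Fin n) ℂ) :
    (star U * X * U)ᴴ = star U * Xᴴ * U := by
  simp only [Matrix.star_eq_conjTranspose, Matrix.conjTranspose_mul,
    Matrix.conjTranspose_conjTranspose, Matrix.mul_assoc]

lemma frobSq_nonneg (M : Matrix (Fin n) (Fin n) ℂ) : 0 ≤ frobSq M :=
  Finset.sum_nonneg fun _ _ => Finset.sum_nonneg fun _ _ => sq_nonneg _

lemma frobSq_eq_re_trace (M : Matrix (Fin n) (Fin n) ℂ) :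
    frobSq M = (Matrix.trace (Mᴴ * M)).re := by
  unfold frobSq
  rw [Finset.sum_comm]
  rw [Matrix.trace, Complex.re_sum]
  refine Finset.sum_congr rfl fun j _ => ?_
  rw [Matrix.diag, Matrix.mul_apply, Complex.re_sum]
  refine Finset.sum_congr rfl fun i _ => ?_
  rw [Matrix.conjTranspose_apply, conj_mul_self', Complex.ofReal_re]

lemma frobSq_eq_re_trace' (M : Matrix (Fin n) (Fin n) ℂ) :
    frobSq M = (Matrix.trace (M * Mᴴ)).re := by
  rw [frobSq_eq_re_trace, Matrix.trace_mul_comm]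

lemma frobSq_conj {U : Matrix (Fin n) (Fin n) ℂ} (hUU : U * star U = 1)
    (M : Matrix (Fin n) (Fin n) ℂ) :
    frobSq (star U * M * U) = frobSq M := by
  rw [frobSq_eq_re_trace, frobSq_eq_re_trace]
  congr 1
  have e : (star U * M * U)ᴴ * (star U * M * U) = star U * (Mᴴ * M) * U := by
    rw [conjTranspose_conj, conj_helper hUU]
  rw [e, Matrix.trace_mul_cycle, ← Matrix.mul_assoc, hUU, Matrix.one_mul]

lemma frobSq_mul_left {μ : Fin n → ℝ} {A : Matrix (Fin n) (Fin n) ℂ}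
    (h1 : Aᴴ * A = Matrix.diagonal fun i => (μ i : ℂ)) (X : Matrix (Fin n) (Fin n) ℂ) :
    frobSq (A * X) = ∑ i, ∑ j, μ i * ‖X i j‖ ^ 2 := by
  have e : (A * X)ᴴ * (A * X) = Xᴴ * ((Matrix.diagonal fun i => (μ i : ℂ)) * X) := by
    rw [Matrix.conjTranspose_mul, Matrix.mul_assoc, ← Matrix.mul_assoc Aᴴ, h1]
  rw [frobSq_eq_re_trace, e, Finset.sum_comm]
  rw [Matrix.trace, Complex.re_sum]
  refine Finset.sum_congr rfl fun j _ => ?_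
  rw [Matrix.diag, Matrix.mul_apply, Complex.re_sum]
  refine Finset.sum_congr rfl fun i _ => ?_
  rw [Matrix.conjTranspose_apply, Matrix.diagonal_mul]
  have e2 : star (X i j) * ((μ i : ℂ) * X i j)
      = ((μ i * ‖X i j‖ ^ 2 : ℝ) : ℂ) := by
    rw [show star (X i j) * ((μ i : ℂ) * X i j) = (μ i : ℂ) * (star (X i j) * X i j) from by
      ring, conj_mul_self']
    push_cast; ring
  rw [e2, Complex.ofReal_re]

lemma frobSq_mul_right {μ : Fin n → ℝ} {A : Matrix (Fin n) (Fin n) ℂ}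
    (h2 : A * Aᴴ = Matrix.diagonal fun i => (μ i : ℂ)) (X : Matrix (Fin n) (Fin n) ℂ) :
    frobSq (X * A) = ∑ i, ∑ j, μ j * ‖X i j‖ ^ 2 := by
  have e : (X * A) * (X * A)ᴴ = X * ((Matrix.diagonal fun i => (μ i : ℂ)) * Xᴴ) := by
    rw [Matrix.conjTranspose_mul, Matrix.mul_assoc, ← Matrix.mul_assoc A, h2]
  rw [frobSq_eq_re_trace', e]
  rw [Matrix.trace, Complex.re_sum]
  refine Finset.sum_congr rfl fun i _ => ?_
  rw [Matrix.diag, Matrix.mul_apply, Complex.re_sum]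
  refine Finset.sum_congr rfl fun j _ => ?_
  rw [Matrix.diagonal_mul, Matrix.conjTranspose_apply]
  have e2 : X i j * ((μ j : ℂ) * star (X i j))
      = ((μ j * ‖X i j‖ ^ 2 : ℝ) : ℂ) := by
    rw [show X i j * ((μ j : ℂ) * star (X i j)) = (μ j : ℂ) * (star (X i j) * X i j) from by
      ring, conj_mul_self']
    push_cast; ring
  rw [e2, Complex.ofReal_re]

lemma scalar_cs (q : ℝ) (hq : 0 ≤ q) (a b : ℂ) :
    ‖a - (q : ℂ) * b‖ ^ 2 ≤ (1 + q ^ 2) * (‖a‖ ^ 2 + ‖b‖ ^ 2) := by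
  have h1 : ‖a - (q : ℂ) * b‖ ≤ ‖a‖ + q * ‖b‖ := by
    calc ‖a - (q : ℂ) * b‖ ≤ ‖a‖ + ‖(q : ℂ) * b‖ := norm_sub_le _ _
      _ = ‖a‖ + q * ‖b‖ := by rw [norm_mul, Complex.norm_real, Real.norm_eq_abs, abs_of_nonneg hq]
  have h2 : (0:ℝ) ≤ ‖a - (q : ℂ) * b‖ := norm_nonneg _
  nlinarith [sq_nonneg (q * ‖a‖ - ‖b‖), norm_nonneg a, norm_nonneg b, sq_nonneg (‖a‖ + q * ‖b‖)]

/-- Main computational inequality. -/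
lemma key_ineq (hn : 2 ≤ n) (q : ℝ) (hq : 0 ≤ q) (μ : Fin n → ℝ) (hμ : ∀ i, 0 ≤ μ i)
    (S : ℝ) (hS : ∀ i j : Fin n, i ≠ j → μ i + μ j ≤ S)
    (A C : Matrix (Fin n) (Fin n) ℂ)
    (h1 : Aᴴ * A = Matrix.diagonal fun i => (μ i : ℂ))
    (h2 : A * Aᴴ = Matrix.diagonal fun i => (μ i : ℂ)) :
    frobSq (A * C - (q : ℂ) • (C * A)) ≤ (1 + q ^ 2) * S * frobSq C := by
  classical
  have : Nontrivial (Fin n) := Fin.nontrivial_iff_two_le.mpr hn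
  have hμS : ∀ i, μ i ≤ S := by
    intro i
    obtain ⟨j, hj⟩ := exists_ne i
    have := hS i j (Ne.symm hj)
    have := hμ j
    linarith
  have hS0 : 0 ≤ S := le_trans (hμ ⟨0, by omega⟩) (hμS _)
  have h1q : (0:ℝ) ≤ 1 + q ^ 2 := by positivity
  -- A is "block diagonal": entries between different eigenvalue levels vanish
  have hA0 : ∀ i j, μ i ≠ μ j → A i j = 0 := by
    intro i j hij
    have hcomm : A * Matrix.diagonal (fun i => (μ i : ℂ))
        = Matrix.diagonal (fun i => (μ i : ℂ)) * A := by
      conv_lhs => rw [← h1]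
      conv_rhs => rw [← h2]
      rw [Matrix.mul_assoc]
    have heq := congrFun (congrFun hcomm i) j
    rw [Matrix.mul_diagonal, Matrix.diagonal_mul] at heq
    have hne : ((μ j : ℂ) - (μ i : ℂ)) ≠ 0 := by
      rw [sub_ne_zero]
      exact_mod_cast fun h => hij (by exact_mod_cast h.symm)
    have h0 : A i j * ((μ j : ℂ) - (μ i : ℂ)) = 0 := by linear_combination heq
    rcases mul_eq_zero.mp h0 with h | h
    · exact h
    · exact absurd h hne
  -- column norms
  have hcol : ∀ j, ∑ i, ‖A i j‖ ^ 2 = μ j := by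
    intro j
    have := congrFun (congrFun h1 j) j
    rw [Matrix.mul_apply, Matrix.diagonal_apply_eq] at this
    have : ∑ k, ((‖A k j‖ ^ 2 : ℝ) : ℂ) = ((μ j : ℝ) : ℂ) := by
      rw [← this]
      refine Finset.sum_congr rfl fun k _ => ?_
      rw [Matrix.conjTranspose_apply, conj_mul_self']
    exact_mod_cast this
  -- the singleton predicate
  set P : Fin n → Prop := fun i => ∀ k, k ≠ i → μ k ≠ μ i with hP
  set Cs : Matrix (Fin n) (Fin n) ℂ :=
    Matrix.of (fun i j => if i = j ∧ P i then C i j else 0) with hCs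
  set Cr : Matrix (Fin n) (Fin n) ℂ := C - Cs with hCr
  have hCs_apply : ∀ i j, Cs i j = if i = j ∧ P i then C i j else 0 := fun i j => rfl
  have hCr_apply : ∀ i j, Cr i j = C i j - Cs i j := fun i j => rfl
  set Ms := A * Cs - (q : ℂ) • (Cs * A) with hMs
  set Mr := A * Cr - (q : ℂ) • (Cr * A) with hMr
  have hsplitM : A * C - (q : ℂ) • (C * A) = Ms + Mr := by
    rw [hMs, hMr, hCr]
    rw [Matrix.mul_sub, Matrix.sub_mul, smul_sub]
    abel
  -- structure of Ms
  have hACs : ∀ i j, (A * Cs) i j = A i j * Cs j j := by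
    intro i j
    rw [Matrix.mul_apply]
    refine Finset.sum_eq_single j (fun k _ hk => ?_) (by simp)
    rw [hCs_apply, if_neg (fun h => hk h.1), mul_zero]
  have hCsA : ∀ i j, (Cs * A) i j = Cs i i * A i j := by
    intro i j
    rw [Matrix.mul_apply]
    refine Finset.sum_eq_single i (fun k _ hk => ?_) (by simp)
    rw [hCs_apply, if_neg (fun h => hk h.1.symm), zero_mul]
  have hMs_apply : ∀ i j, Ms i j = A i j * Cs j j - (q:ℂ) * (Cs i i * A i j) := by
    intro i j
    rw [hMs]
    simp only [Matrix.sub_apply, Matrix.smul_apply, smul_eq_mul, hACs, hCsA]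
  have hMs0 : ∀ i j, ¬(i = j ∧ P i) → Ms i j = 0 := by
    intro i j h
    rw [hMs_apply]
    by_cases hij : i = j
    · subst hij
      have hPi : ¬ P i := fun hp => h ⟨rfl, hp⟩
      rw [hCs_apply, if_neg (fun hc => hPi hc.2)]
      ring
    · have hterm1 : A i j * Cs j j = 0 := by
        by_cases hPj : P j
        · have : μ i ≠ μ j := hPj i hij
          rw [hA0 i j this, zero_mul]
        · rw [hCs_apply]; simp [hPj]
      have hterm2 : Cs i i * A i j = 0 := by
        by_cases hPi : P i
        · have : μ i ≠ μ j := fun h' => hPi j (fun hji => hij hji.symm) h'.symm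
          rw [hA0 i j this, mul_zero]
        · rw [hCs_apply]; simp [hPi]
      rw [hterm1, hterm2, mul_zero, sub_zero]
  -- Mr vanishes on the singleton diagonal
  have hMr0 : ∀ i, P i → Mr i i = 0 := by
    intro i hPi
    have hCrii : Cr i i = 0 := by
      rw [hCr_apply, hCs_apply, if_pos ⟨rfl, hPi⟩, sub_self]
    have e1 : (A * Cr) i i = 0 := by
      rw [Matrix.mul_apply]
      refine Finset.sum_eq_zero fun k _ => ?_
      by_cases hk : k = i
      · subst hk; rw [hCrii, mul_zero]
      · rw [hA0 i k (fun h => hPi k hk h.symm), zero_mul]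
    have e2 : (Cr * A) i i = 0 := by
      rw [Matrix.mul_apply]
      refine Finset.sum_eq_zero fun k _ => ?_
      by_cases hk : k = i
      · subst hk; rw [hCrii, zero_mul]
      · rw [hA0 k i (hPi k hk), mul_zero]
    rw [hMr]
    simp [Matrix.sub_apply, Matrix.smul_apply, e1, e2]
  -- frobSq splits
  have hfrobM : frobSq (A * C - (q : ℂ) • (C * A)) = frobSq Ms + frobSq Mr := by
    rw [hsplitM]
    unfold frobSq
    rw [← Finset.sum_add_distrib]
    refine Finset.sum_congr rfl fun i _ => ?_
    rw [← Finset.sum_add_distrib]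
    refine Finset.sum_congr rfl fun j _ => ?_
    by_cases h : i = j ∧ P i
    · obtain ⟨rfl, hPi⟩ := h
      simp [Matrix.add_apply, hMr0 i hPi]
    · simp [Matrix.add_apply, hMs0 i j h]
  have hfrobC : frobSq C = frobSq Cs + frobSq Cr := by
    unfold frobSq
    rw [← Finset.sum_add_distrib]
    refine Finset.sum_congr rfl fun i _ => ?_
    rw [← Finset.sum_add_distrib]
    refine Finset.sum_congr rfl fun j _ => ?_
    by_cases h : i = j ∧ P i
    · have : Cr i j = 0 := by rw [hCr_apply, hCs_apply, if_pos h, sub_self]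
      rw [this, hCs_apply, if_pos h]
      simp
    · have : Cs i j = 0 := by rw [hCs_apply, if_neg h]
      rw [hCr_apply, this]
      simp
  -- bound on Ms
  have hMs_bound : frobSq Ms ≤ (1 + q ^ 2) * S * frobSq Cs := by
    unfold frobSq
    rw [Finset.mul_sum]
    refine Finset.sum_le_sum fun i _ => ?_
    rw [Finset.mul_sum]
    refine Finset.sum_le_sum fun j _ => ?_
    by_cases h : i = j ∧ P i
    · obtain ⟨rfl, hPi⟩ := h
      rw [hMs_apply]
      have hc : Cs i i = C i i := by rw [hCs_apply, if_pos ⟨rfl, hPi⟩]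
      rw [hc]
      have : A i i * C i i - (q:ℂ) * (C i i * A i i) = ((1 - q : ℝ) : ℂ) * (A i i * C i i) := by
        push_cast; ring
      rw [this]
      have hAle : ‖A i i‖ ^ 2 ≤ μ i := by
        rw [← hcol i]
        exact Finset.single_le_sum (fun k _ => sq_nonneg ‖A k i‖) (Finset.mem_univ i)
      have hμiS : μ i ≤ S := hμS i
      have hnorm : ‖((1 - q : ℝ) : ℂ) * (A i i * C i i)‖ ^ 2
          = (1 - q) ^ 2 * (‖A i i‖ ^ 2 * ‖C i i‖ ^ 2) := by
        rw [norm_mul, norm_mul, Complex.norm_real, Real.norm_eq_abs]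
        rw [mul_pow, mul_pow, sq_abs]
      rw [hnorm]
      have hq2 : (1 - q) ^ 2 ≤ 1 + q ^ 2 := by nlinarith
      have hA2 : (0:ℝ) ≤ ‖A i i‖ ^ 2 := sq_nonneg _
      have hC2 : (0:ℝ) ≤ ‖C i i‖ ^ 2 := sq_nonneg _
      calc (1 - q) ^ 2 * (‖A i i‖ ^ 2 * ‖C i i‖ ^ 2)
          ≤ (1 + q ^ 2) * (‖A i i‖ ^ 2 * ‖C i i‖ ^ 2) :=
            mul_le_mul_of_nonneg_right hq2 (mul_nonneg hA2 hC2)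
        _ ≤ (1 + q ^ 2) * (S * ‖C i i‖ ^ 2) :=
            mul_le_mul_of_nonneg_left
              (mul_le_mul_of_nonneg_right (le_trans hAle hμiS) hC2) h1q
        _ = (1 + q ^ 2) * S * ‖C i i‖ ^ 2 := by rw [mul_assoc]
    · rw [hMs0 i j h]
      have : Cs i j = 0 := by rw [hCs_apply, if_neg h]
      rw [this]
      simp
  -- bound on Mr
  have hMr_bound : frobSq Mr ≤ (1 + q ^ 2) * S * frobSq Cr := by
    have step1 : frobSq Mr ≤ (1 + q ^ 2) * (frobSq (A * Cr) + frobSq (Cr * A)) := by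
      unfold frobSq
      rw [← Finset.sum_add_distrib, Finset.mul_sum]
      refine Finset.sum_le_sum fun i _ => ?_
      rw [← Finset.sum_add_distrib, Finset.mul_sum]
      refine Finset.sum_le_sum fun j _ => ?_
      have : Mr i j = (A * Cr) i j - (q : ℂ) * (Cr * A) i j := by
        rw [hMr]; simp [Matrix.sub_apply, Matrix.smul_apply]
      rw [this]
      exact scalar_cs q hq _ _
    have step2 : frobSq (A * Cr) + frobSq (Cr * A) ≤ S * frobSq Cr := by
      rw [frobSq_mul_left h1, frobSq_mul_right h2]
      unfold frobSq
      rw [← Finset.sum_add_distrib, Finset.mul_sum]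
      refine Finset.sum_le_sum fun i _ => ?_
      rw [← Finset.sum_add_distrib, Finset.mul_sum]
      refine Finset.sum_le_sum fun j _ => ?_
      rw [← add_mul]
      by_cases hz : Cr i j = 0
      · rw [hz]; simp
      · apply mul_le_mul_of_nonneg_right _ (sq_nonneg _)
        by_cases hij : i = j
        · subst hij
          have hPi : ¬ P i := by
            intro hPi
            apply hz
            rw [hCr_apply, hCs_apply, if_pos ⟨rfl, hPi⟩, sub_self]
          have hPi' : ∃ k, k ≠ i ∧ μ k = μ i := by
            by_contra hno
            push_neg at hno
            exact hPi fun k hk => hno k hk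
          obtain ⟨k, hk, hkμ⟩ := hPi'
          have := hS i k (Ne.symm hk)
          rw [hkμ] at this
          linarith
        · exact hS i j hij
    calc frobSq Mr ≤ (1 + q ^ 2) * (frobSq (A * Cr) + frobSq (Cr * A)) := step1
      _ ≤ (1 + q ^ 2) * (S * frobSq Cr) := mul_le_mul_of_nonneg_left step2 h1q
      _ = (1 + q ^ 2) * S * frobSq Cr := by ring
  rw [hfrobM, hfrobC]
  linarith

end Aux

/-- The sum of the squares of the two largest singular values of `A`, expressed as
the maximum of `sv A i ^ 2 + sv A j ^ 2` over pairs of distinct indices. -/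
theorem stmt_2 {n : ℕ} (hn : 2 ≤ n) (q : ℝ) (hq : 0 ≤ q)
    (A : Matrix (Fin n) (Fin n) ℂ) (hA : A * Aᴴ = Aᴴ * A)
    (B : Matrix (Fin n) (Fin n) ℂ) :
    frobSq (A * B - (q : ℂ) • (B * A)) ≤
      (1 + q ^ 2) *
        ((Finset.univ.filter fun p : Fin n × Fin n => p.1 ≠ p.2).sup'
          (⟨(⟨0, by omega⟩, ⟨1, by omega⟩), by simp [Fin.ext_iff]⟩)
          fun p => sv A p.1 ^ 2 + sv A p.2 ^ 2) *
        frobSq B := by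
  classical
  have hH : (Aᴴ * A).IsHermitian := Matrix.isHermitian_conjTranspose_mul_self A
  set μ : Fin n → ℝ := hH.eigenvalues with hμdef
  have hμ : ∀ i, 0 ≤ μ i := fun i =>
    Matrix.eigenvalues_conjTranspose_mul_self_nonneg A i
  set U : Matrix (Fin n) (Fin n) ℂ := (hH.eigenvectorUnitary : Matrix (Fin n) (Fin n) ℂ)
    with hUdef
  have hsUU : star U * U = 1 := hH.eigenvectorUnitary.2.1
  have hUsU : U * star U = 1 := hH.eigenvectorUnitary.2.2
  have hdiag : star U * (Aᴴ * A) * U = Matrix.diagonal fun i => (μ i : ℂ) := by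
    have := hH.conjStarAlgAut_star_eigenvectorUnitary
    rw [Unitary.conjStarAlgAut_star_apply] at this
    exact this
  set A' := star U * A * U with hA'def
  set C := star U * B * U with hCdef
  have h1 : A'ᴴ * A' = Matrix.diagonal fun i => (μ i : ℂ) := by
    rw [hA'def, ← hdiag, conjTranspose_conj, conj_helper hUsU]
  have h2 : A' * A'ᴴ = Matrix.diagonal fun i => (μ i : ℂ) := by
    rw [hA'def, ← hdiag, conjTranspose_conj, conj_helper hUsU, hA]
  set S : ℝ := (Finset.univ.filter fun p : Fin n × Fin n => p.1 ≠ p.2).sup'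
      (⟨(⟨0, by omega⟩, ⟨1, by omega⟩), by simp [Fin.ext_iff]⟩)
      (fun p => sv A p.1 ^ 2 + sv A p.2 ^ 2) with hSdef
  have hsv : ∀ i, sv A i ^ 2 = μ i := fun i => Real.sq_sqrt (hμ i)
  have hS : ∀ i j : Fin n, i ≠ j → μ i + μ j ≤ S := by
    intro i j hij
    rw [← hsv i, ← hsv j]
    exact Finset.le_sup' (f := fun p : Fin n × Fin n => sv A p.1 ^ 2 + sv A p.2 ^ 2)
      (by simp [hij] : (i, j) ∈ Finset.univ.filter fun p : Fin n × Fin n => p.1 ≠ p.2)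
  have hconjM : star U * (A * B - (q : ℂ) • (B * A)) * U = A' * C - (q : ℂ) • (C * A') := by
    rw [hA'def, hCdef, conj_helper hUsU A B, conj_helper hUsU B A]
    rw [Matrix.mul_sub, Matrix.sub_mul, Matrix.mul_smul, Matrix.smul_mul]
  have e1 : frobSq (A * B - (q : ℂ) • (B * A)) = frobSq (A' * C - (q : ℂ) • (C * A')) := by
    rw [← hconjM, frobSq_conj hUsU]
  have e2 : frobSq B = frobSq C := (frobSq_conj hUsU B).symm
  rw [e1, e2]
  exact key_ineq hn q hq μ hμ S hS A' C h1 h2
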